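/- Let γ be an uncountable cardinal and κ a cardinal with ℵ₀ < κ ≤ γ. Then every Abelian group G of cardinality γ is κ-asymorphic to the free Abelian group A_γ of rank γ (i.e., the direct sum of γ copies of the integers). -/

import Mathlib

open Cardinal Pointwise

universe u

/-- A bijection `f : G ≃ H` between additive groups is a `κ`-asymorphism if for all
`X ∈ [G]^{<κ}` and `Y ∈ [H]^{<κ}` there are `X' ∈ [G]^{<κ}`, `Y' ∈ [H]^{<κ}` with
`f(X + x) ⊆ Y' + f x` for all `x ∈ G` and `f⁻¹(Y + y) ⊆ X' + f⁻¹ y` for all `y ∈ H`. -/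
def IsAddAsymorphism {G H : Type u} [AddGroup G] [AddGroup H] (κ : Cardinal.{u})
    (f : G ≃ H) : Prop :=
  ∀ X : Set G, ∀ Y : Set H, #X < κ → #Y < κ →
    ∃ X' : Set G, ∃ Y' : Set H, #X' < κ ∧ #Y' < κ ∧
      (∀ x : G, ⇑f '' (X + {x}) ⊆ Y' + {f x}) ∧
      (∀ y : H, ⇑f.symm '' (Y + {y}) ⊆ X' + {f.symm y})

namespace Asym

variable {K : Type u} {L : Type u} [AddCommGroup K] [AddCommGroup L]

/-- displacement set of `φ` on `S` at `a` -/
def disp (φ : K → L) (S : Set K) (a : K) : Set L := (fun x => φ (x + a) - φ x) '' S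

lemma countable_closure {s : Set K} (hs : s.Countable) :
    ((AddSubgroup.closure s : AddSubgroup K) : Set K).Countable := by
  have := hs.to_subtype
  have hsub : ((AddSubgroup.closure s : AddSubgroup K) : Set K) ⊆
      Set.range (fun l : s →₀ ℤ => Finsupp.linearCombination ℤ (Subtype.val) l) := by
    intro x hx
    rw [← Submodule.span_int_eq_addSubgroupClosure] at hx
    have hx' : x ∈ Submodule.span ℤ s := hx
    exact (Finsupp.mem_span_iff_linearCombination ℤ s x).1 hx'
  exact (Set.countable_range _).mono hsub

lemma infinite_quot (A : AddSubgroup K) (hK : ℵ₀ < #K) (hA : #A < #K) : Infinite (K ⧸ A) := by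
  rw [Cardinal.infinite_iff]
  by_contra h
  push_neg at h
  have hKeq : #K = #(K ⧸ A) * #A := by
    have := Cardinal.mk_congr (AddSubgroup.addGroupEquivQuotientProdAddSubgroup (s := A))
    rwa [Cardinal.mk_prod, Cardinal.lift_id, Cardinal.lift_id] at this
  have h1 : #K ≤ max (max #(K ⧸ A) #A) ℵ₀ := hKeq ▸ Cardinal.mul_le_max _ _
  have h2 : max (max #(K ⧸ A) #A) ℵ₀ < #K := max_lt (max_lt (h.trans hK) hA) hK
  exact absurd h1 (not_le.2 h2)

/-- A partial approximation to the asymorphism. -/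
structure Approx (K L : Type u) [AddCommGroup K] [AddCommGroup L] where
  A : AddSubgroup K
  B : AddSubgroup L
  φ : K → L
  ψ : L → K

structure Good (p : Approx K L) : Prop where
  mapsTo : ∀ x ∈ p.A, p.φ x ∈ p.B
  mapsTo' : ∀ y ∈ p.B, p.ψ y ∈ p.A
  linv : ∀ x ∈ p.A, p.ψ (p.φ x) = x
  rinv : ∀ y ∈ p.B, p.φ (p.ψ y) = y
  dcount : ∀ a ∈ p.A, (disp p.φ p.A a).Countable
  dcount' : ∀ b ∈ p.B, (disp p.ψ p.B b).Countable

structure Ext (p q : Approx K L) : Prop where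
  monoA : p.A ≤ q.A
  monoB : p.B ≤ q.B
  agree : ∀ x ∈ p.A, q.φ x = p.φ x
  agree' : ∀ y ∈ p.B, q.ψ y = p.ψ y
  stab : ∀ a ∈ p.A, disp q.φ q.A a ⊆ disp p.φ p.A a
  stab' : ∀ b ∈ p.B, disp q.ψ q.B b ⊆ disp p.ψ p.B b

lemma Ext.refl (p : Approx K L) : Ext p p :=
  ⟨le_rfl, le_rfl, fun _ _ => rfl, fun _ _ => rfl, fun _ _ => Set.Subset.rfl,
    fun _ _ => Set.Subset.rfl⟩

lemma Ext.trans {p q r : Approx K L} (h1 : Ext p q) (h2 : Ext q r) : Ext p r :=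
  ⟨h1.monoA.trans h2.monoA, h1.monoB.trans h2.monoB,
    fun x hx => (h2.agree x (h1.monoA hx)).trans (h1.agree x hx),
    fun y hy => (h2.agree' y (h1.monoB hy)).trans (h1.agree' y hy),
    fun a ha => (h2.stab a (h1.monoA ha)).trans (h1.stab a ha),
    fun b hb => (h2.stab' b (h1.monoB hb)).trans (h1.stab' b hb)⟩

/-- quotient image of `A'` -/
abbrev SQ (A A' : AddSubgroup K) : AddSubgroup (K ⧸ A) :=
  AddSubgroup.map (QuotientAddGroup.mk' A) A'

structure SideData (A A' : AddSubgroup K) (σ : K ⧸ A → K) : Prop where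
  le : A ≤ A'
  σ0 : σ 0 = 0
  σmem : ∀ q ∈ SQ A A', σ q ∈ A'
  σsec : ∀ q ∈ SQ A A', ((σ q : K) : K ⧸ A) = q

section side
variable {A A' : AddSubgroup K} {σ : K ⧸ A → K}

lemma SideData.mem_iff (hS : SideData A A' σ) (x : K) :
    x ∈ A' ↔ (x : K ⧸ A) ∈ SQ A A' := by
  constructor
  · intro hx; exact ⟨x, hx, rfl⟩
  · rintro ⟨c, hc, hcx⟩
    rw [QuotientAddGroup.mk'_apply] at hcx
    have : x - c ∈ A := by
      rw [← QuotientAddGroup.eq_zero_iff, QuotientAddGroup.mk_sub, hcx, sub_self]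
    simpa using add_mem (hS.le this) hc

lemma SideData.usub (hS : SideData A A' σ) {x : K} (hx : (x : K ⧸ A) ∈ SQ A A') :
    x - σ (x : K ⧸ A) ∈ A := by
  rw [← QuotientAddGroup.eq_zero_iff, QuotientAddGroup.mk_sub, hS.σsec _ hx, sub_self]

lemma SideData.zero_mem_SQ (hS : SideData A A' σ) : (0 : K ⧸ A) ∈ SQ A A' := zero_mem _

lemma SideData.coe_mem_SQ (hS : SideData A A' σ) {x : K} (hx : x ∈ A') :
    (x : K ⧸ A) ∈ SQ A A' := (hS.mem_iff x).1 hx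

lemma SideData.mk_zero_of_mem (hS : SideData A A' σ) {x : K} (hx : x ∈ A) :
    (x : K ⧸ A) = 0 := (QuotientAddGroup.eq_zero_iff x).2 hx

end side

/-- the extended map -/
noncomputable def stepFun (A : AddSubgroup K) (B : AddSubgroup L) (φ : K → L)
    (A' : AddSubgroup K) (σ : K ⧸ A → K) (σ' : L ⧸ B → L) (e : K ⧸ A → L ⧸ B) : K → L :=
  fun x =>
    letI := Classical.dec ((x : K ⧸ A) ∈ SQ A A')
    if _ : (x : K ⧸ A) ∈ SQ A A' then φ (x - σ (x : K ⧸ A)) + σ' (e (x : K ⧸ A)) else 0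

section step
variable {A : AddSubgroup K} {B : AddSubgroup L} {φ : K → L} {A' : AddSubgroup K}
  {B' : AddSubgroup L} {σ : K ⧸ A → K} {σ' : L ⧸ B → L} {e : K ⧸ A → L ⧸ B}
  (hS : SideData A A' σ) (hS' : SideData B B' σ')
  (he : ∀ q ∈ SQ A A', e q ∈ SQ B B') (he0 : e 0 = 0)

include hS hS' he he0

lemma stepFun_eq {x : K} (hx : (x : K ⧸ A) ∈ SQ A A') :
    stepFun A B φ A' σ σ' e x = φ (x - σ (x : K ⧸ A)) + σ' (e (x : K ⧸ A)) := by
  rw [stepFun]; exact dif_pos hx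

lemma stepFun_agree {x : K} (hx : x ∈ A) : stepFun A B φ A' σ σ' e x = φ x := by
  have h0 : (x : K ⧸ A) = 0 := hS.mk_zero_of_mem hx
  rw [stepFun_eq hS hS' he he0 (by rw [h0]; exact zero_mem _)]
  simp [h0, hS.σ0, he0, hS'.σ0]

lemma stepFun_mapsTo (hφ : ∀ x ∈ A, φ x ∈ B) {x : K} (hx : x ∈ A') :
    stepFun A B φ A' σ σ' e x ∈ B' := by
  have hq := hS.coe_mem_SQ hx
  rw [stepFun_eq hS hS' he he0 hq]
  exact add_mem (hS'.le (hφ _ (hS.usub hq))) (hS'.σmem _ (he _ hq))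

lemma stepFun_stab {a : K} (ha : a ∈ A) :
    disp (stepFun A B φ A' σ σ' e) A' a ⊆ disp φ A a := by
  rintro - ⟨x, hx, rfl⟩
  have hq := hS.coe_mem_SQ hx
  have hxa : ((x + a : K) : K ⧸ A) = (x : K ⧸ A) := by
    rw [QuotientAddGroup.mk_add, hS.mk_zero_of_mem ha, add_zero]
  have hxA' : x + a ∈ A' := add_mem hx (hS.le ha)
  refine ⟨x - σ (x : K ⧸ A), hS.usub hq, ?_⟩
  dsimp only
  rw [stepFun_eq hS hS' he he0 (by rw [hxa]; exact hq), stepFun_eq hS hS' he he0 hq, hxa]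
  have : x + a - σ (x : K ⧸ A) = x - σ (x : K ⧸ A) + a := by abel
  rw [this]
  abel

lemma stepFun_dcount (hcount : ((SQ A A' : AddSubgroup (K ⧸ A)) : Set (K ⧸ A)).Countable)
    (hd : ∀ b ∈ A, (disp φ A b).Countable) {a : K} (ha : a ∈ A') :
    (disp (stepFun A B φ A' σ σ' e) A' a).Countable := by
  have hqa := hS.coe_mem_SQ ha
  have hcov : disp (stepFun A B φ A' σ σ' e) A' a ⊆
      ⋃ q ∈ (SQ A A' : Set (K ⧸ A)),
        (fun z => z + (σ' (e (q + (a : K ⧸ A))) - σ' (e q))) ''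
          disp φ A (σ q + a - σ (q + (a : K ⧸ A))) := by
    rintro - ⟨x, hx, rfl⟩
    have hq := hS.coe_mem_SQ hx
    have hqsum : (x : K ⧸ A) + (a : K ⧸ A) ∈ SQ A A' := add_mem hq hqa
    have hxa : ((x + a : K) : K ⧸ A) = (x : K ⧸ A) + (a : K ⧸ A) := rfl
    refine Set.mem_biUnion hq ?_
    refine ⟨φ (x - σ (x : K ⧸ A) + (σ (x : K ⧸ A) + a - σ ((x : K ⧸ A) + (a : K ⧸ A)))) -
      φ (x - σ (x : K ⧸ A)), ⟨x - σ (x : K ⧸ A), hS.usub hq, rfl⟩, ?_⟩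
    dsimp only
    rw [stepFun_eq hS hS' he he0 (by rw [hxa]; exact hqsum), stepFun_eq hS hS' he he0 hq, hxa]
    have harr : x - σ (x : K ⧸ A) + (σ (x : K ⧸ A) + a - σ ((x : K ⧸ A) + (a : K ⧸ A))) =
        x + a - σ ((x : K ⧸ A) + (a : K ⧸ A)) := by abel
    rw [harr]
    abel
  refine Set.Countable.mono hcov ?_
  refine Set.Countable.biUnion hcount fun q hq => Set.Countable.image ?_ _
  have hb : σ q + a - σ (q + (a : K ⧸ A)) ∈ A := by
    rw [← QuotientAddGroup.eq_zero_iff, QuotientAddGroup.mk_sub, QuotientAddGroup.mk_add,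
      hS.σsec _ hq, hS.σsec _ (add_mem hq hqa), sub_self]
  exact hd _ hb

omit hS hS' he he0 in
lemma stepFun_inv {ψ : L → K} {e' : L ⧸ B → K ⧸ A}
    (hS : SideData A A' σ) (hS' : SideData B B' σ')
    (he : ∀ q ∈ SQ A A', e q ∈ SQ B B') (hee : ∀ q ∈ SQ A A', e' (e q) = q)
    (hφB : ∀ x ∈ A, φ x ∈ B) (hψφ : ∀ x ∈ A, ψ (φ x) = x)
    {x : K} (hx : x ∈ A') :
    stepFun B A ψ B' σ' σ e' (stepFun A B φ A' σ σ' e x) = x := by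
  have hq := hS.coe_mem_SQ hx
  have hu := hS.usub hq
  have h1 : stepFun A B φ A' σ σ' e x = φ (x - σ (x : K ⧸ A)) + σ' (e (x : K ⧸ A)) := by
    rw [stepFun]; exact dif_pos hq
  have heq : ((stepFun A B φ A' σ σ' e x : L) : L ⧸ B) = e (x : K ⧸ A) := by
    rw [h1, QuotientAddGroup.mk_add, hS'.mk_zero_of_mem (hφB _ hu),
      hS'.σsec _ (he _ hq), zero_add]
  have hq' : ((stepFun A B φ A' σ σ' e x : L) : L ⧸ B) ∈ SQ B B' := by
    rw [heq]; exact he _ hq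
  conv_lhs => rw [stepFun]
  rw [dif_pos hq', heq, h1]
  have : φ (x - σ (x : K ⧸ A)) + σ' (e (x : K ⧸ A)) - σ' (e (x : K ⧸ A)) =
      φ (x - σ (x : K ⧸ A)) := by abel
  rw [this, hψφ _ hu, hee _ hq]
  abel
end step
variable {K : Type u} {L : Type u} [AddCommGroup K] [AddCommGroup L]

lemma exists_sigma {A A' : AddSubgroup K} (hle : A ≤ A') :
    ∃ σ : K ⧸ A → K, SideData A A' σ := by
  classical
  refine ⟨fun q => if h : q = 0 then 0 else if h2 : q ∈ SQ A A' then
    (AddSubgroup.mem_map.mp h2).choose else 0, ?_, by simp, ?_, ?_⟩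
  · exact hle
  · intro q hq
    by_cases h : q = 0
    · simpa [h] using zero_mem A'
    · simpa [h, hq] using (AddSubgroup.mem_map.mp hq).choose_spec.1
  · intro q hq
    by_cases h : q = 0
    · simp [h]
    · have hspec := (AddSubgroup.mem_map.mp hq).choose_spec.2
      rw [QuotientAddGroup.mk'_apply] at hspec
      simpa [h, hq] using hspec

lemma exists_side (A : AddSubgroup K) (hK : ℵ₀ < #K) (hA : #A < #K) (g : K) :
    ∃ (A' : AddSubgroup K) (σ : K ⧸ A → K), SideData A A' σ ∧ g ∈ A' ∧
      #A' ≤ #A + ℵ₀ ∧ Countable (SQ A A') ∧ Infinite (SQ A A') := by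
  haveI := infinite_quot A hK hA
  set v := Infinite.natEmbedding (K ⧸ A) with hv
  set s : Set K := insert g (Set.range fun n => (v n).out) with hs
  set C : AddSubgroup K := AddSubgroup.closure s with hC
  have hsc : s.Countable := (Set.countable_range _).insert g
  have hCc : ((C : Set K)).Countable := countable_closure hsc
  haveI hCcc : Countable C := hCc.to_subtype
  set A' : AddSubgroup K := A ⊔ C with hA'
  obtain ⟨σ, hσ⟩ := exists_sigma (le_sup_left : A ≤ A')
  have hCle : C ≤ A' := le_sup_right
  have hgC : g ∈ C := AddSubgroup.subset_closure (Set.mem_insert _ _)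
  have hout : ∀ n, ((v n).out : K ⧸ A) = v n := fun n => QuotientAddGroup.out_eq' _
  have houtC : ∀ n, (v n).out ∈ C := fun n =>
    AddSubgroup.subset_closure (Set.mem_insert_of_mem _ ⟨n, rfl⟩)
  refine ⟨A', σ, hσ, hCle hgC, ?_, ?_, ?_⟩
  · -- cardinality
    have hsurj : Function.Surjective (fun p : A × C => (⟨p.1 + p.2,
        add_mem ((le_sup_left : A ≤ A') p.1.2) (hCle p.2.2)⟩ : A')) := by
      rintro ⟨x, hx⟩
      obtain ⟨a, ha, c, hc, rfl⟩ := AddSubgroup.mem_sup.mp hx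
      exact ⟨(⟨a, ha⟩, ⟨c, hc⟩), rfl⟩
    have h1 : #A' ≤ #A * #C := by
      simpa [Cardinal.mk_prod] using Cardinal.mk_le_of_surjective hsurj
    have h2 : #C ≤ ℵ₀ := by
      simpa using hCc.le_aleph0
    calc #A' ≤ #A * #C := h1
      _ ≤ (#A + ℵ₀) * (#A + ℵ₀) :=
        mul_le_mul' (self_le_add_right _ _) (h2.trans (self_le_add_left _ _))
      _ = #A + ℵ₀ := Cardinal.mul_eq_self (self_le_add_left _ _)
  · -- countable
    have hsurj : Function.Surjective (fun c : C => (⟨QuotientAddGroup.mk' A c,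
        AddSubgroup.mem_map_of_mem _ (hCle c.2)⟩ : SQ A A')) := by
      rintro ⟨q, hq⟩
      obtain ⟨x, hx, rfl⟩ := AddSubgroup.mem_map.mp hq
      obtain ⟨a, ha, c, hc, rfl⟩ := AddSubgroup.mem_sup.mp hx
      refine ⟨⟨c, hc⟩, ?_⟩
      ext
      simp only [QuotientAddGroup.mk'_apply, QuotientAddGroup.mk_add]
      rw [(QuotientAddGroup.eq_zero_iff a).2 ha, zero_add]
    exact hsurj.countable
  · -- infinite
    have hinj : Function.Injective (fun n : ℕ => (⟨v n,
        ⟨(v n).out, hCle (houtC n), by rw [QuotientAddGroup.mk'_apply, hout]⟩⟩ : SQ A A')) := by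
      intro m n hmn
      exact v.injective (congrArg Subtype.val hmn)
    exact Infinite.of_injective _ hinj

lemma exists_e {A : AddSubgroup K} {B : AddSubgroup L} {A' : AddSubgroup K} {B' : AddSubgroup L}
    [Countable (SQ A A')] [Infinite (SQ A A')] [Countable (SQ B B')] [Infinite (SQ B B')] :
    ∃ (e : K ⧸ A → L ⧸ B) (e' : L ⧸ B → K ⧸ A),
      (∀ q ∈ SQ A A', e q ∈ SQ B B') ∧ e 0 = 0 ∧ (∀ q ∈ SQ A A', e' (e q) = q) ∧
      (∀ q ∈ SQ B B', e' q ∈ SQ A A') ∧ e' 0 = 0 ∧ (∀ q ∈ SQ B B', e (e' q) = q) := by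
  classical
  have hcard : #(SQ A A') = #(SQ B B') := by
    rw [le_antisymm Cardinal.mk_le_aleph0 (Cardinal.aleph0_le_mk _),
      le_antisymm Cardinal.mk_le_aleph0 (Cardinal.aleph0_le_mk _)]
  obtain ⟨E⟩ := Cardinal.eq.1 hcard
  set E0 := E.trans (Equiv.swap (E ⟨0, zero_mem _⟩) ⟨0, zero_mem _⟩) with hE0
  have hE00 : E0 ⟨0, zero_mem _⟩ = ⟨0, zero_mem _⟩ := by
    simp [hE0, Equiv.swap_apply_left]
  have hE00' : E0.symm ⟨0, zero_mem _⟩ = ⟨0, zero_mem _⟩ := by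
    rw [Equiv.symm_apply_eq, hE00]
  refine ⟨fun q => if h : q ∈ SQ A A' then ↑(E0 ⟨q, h⟩) else 0,
    fun q => if h : q ∈ SQ B B' then ↑(E0.symm ⟨q, h⟩) else 0, ?_, ?_, ?_, ?_, ?_, ?_⟩
  · intro q hq; simpa [hq] using (E0 ⟨q, hq⟩).2
  · simp only [dif_pos (zero_mem _)]
    rw [show (⟨(0 : K ⧸ A), zero_mem _⟩ : SQ A A') = ⟨0, zero_mem _⟩ from rfl, hE00]
  · intro q hq
    have h2 : ((E0 ⟨q, hq⟩ : L ⧸ B)) ∈ SQ B B' := (E0 ⟨q, hq⟩).2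
    simp only [dif_pos hq, dif_pos h2]
    rw [show (⟨((E0 ⟨q, hq⟩ : L ⧸ B)), h2⟩ : SQ B B') = E0 ⟨q, hq⟩ from Subtype.ext rfl,
      Equiv.symm_apply_apply]
  · intro q hq; simpa [hq] using (E0.symm ⟨q, hq⟩).2
  · simp only [dif_pos (zero_mem _)]
    rw [show (⟨(0 : L ⧸ B), zero_mem _⟩ : SQ B B') = ⟨0, zero_mem _⟩ from rfl, hE00']
  · intro q hq
    have h2 : ((E0.symm ⟨q, hq⟩ : K ⧸ A)) ∈ SQ A A' := (E0.symm ⟨q, hq⟩).2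
    simp only [dif_pos hq, dif_pos h2]
    rw [show (⟨((E0.symm ⟨q, hq⟩ : K ⧸ A)), h2⟩ : SQ A A') = E0.symm ⟨q, hq⟩ from
      Subtype.ext rfl, Equiv.apply_symm_apply]

lemma step_exists {p : Approx K L} (hp : Good p) (hK : ℵ₀ < #K) (hL : ℵ₀ < #L)
    (hA : #p.A < #K) (hB : #p.B < #L) (g : K) (h : L) :
    ∃ q : Approx K L, Good q ∧ Ext p q ∧ g ∈ q.A ∧ h ∈ q.B ∧
      #q.A ≤ #p.A + ℵ₀ ∧ #q.B ≤ #p.B + ℵ₀ := by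
  obtain ⟨A', σ, hS, hgA', hcardA, hc1, hi1⟩ := exists_side p.A hK hA g
  obtain ⟨B', σ', hS', hhB', hcardB, hc2, hi2⟩ := exists_side p.B hL hB h
  obtain ⟨e, e', he, he0, hee, he', he'0, he'e⟩ := exists_e (A := p.A) (B := p.B)
    (A' := A') (B' := B')
  refine ⟨⟨A', B', stepFun p.A p.B p.φ A' σ σ' e, stepFun p.B p.A p.ψ B' σ' σ e'⟩,
    ⟨?_, ?_, ?_, ?_, ?_, ?_⟩, ⟨hS.le, hS'.le, ?_, ?_, ?_, ?_⟩, hgA', hhB', hcardA, hcardB⟩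
  · exact fun x hx => stepFun_mapsTo hS hS' he he0 hp.mapsTo hx
  · exact fun y hy => stepFun_mapsTo hS' hS he' he'0 hp.mapsTo' hy
  · exact fun x hx => stepFun_inv hS hS' he hee hp.mapsTo hp.linv hx
  · exact fun y hy => stepFun_inv hS' hS he' he'e hp.mapsTo' hp.rinv hy
  · exact fun a ha => stepFun_dcount hS hS' he he0
      (Set.countable_coe_iff.mp hc1) hp.dcount ha
  · exact fun b hb => stepFun_dcount hS' hS he' he'0
      (Set.countable_coe_iff.mp hc2) hp.dcount' hb
  · exact fun x hx => stepFun_agree hS hS' he he0 hx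
  · exact fun y hy => stepFun_agree hS' hS he' he'0 hy
  · exact fun a ha => stepFun_stab hS hS' he he0 ha
  · exact fun b hb => stepFun_stab hS' hS he' he'0 hb

noncomputable def unionApprox {ι : Type u} (Q : ι → Approx K L) : Approx K L where
  A := AddSubgroup.closure (⋃ i, ((Q i).A : Set K))
  B := AddSubgroup.closure (⋃ i, ((Q i).B : Set L))
  φ := fun x =>
    letI := Classical.dec (∃ i, x ∈ (Q i).A)
    if h : ∃ i, x ∈ (Q i).A then (Q h.choose).φ x else 0
  ψ := fun y =>
    letI := Classical.dec (∃ i, y ∈ (Q i).B)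
    if h : ∃ i, y ∈ (Q i).B then (Q h.choose).ψ y else 0

section union
variable {ι : Type u} {Q : ι → Approx K L}

lemma unionA_eq : (unionApprox Q).A = ⨆ i, (Q i).A := by
  simp [unionApprox, AddSubgroup.closure_iUnion, AddSubgroup.closure_eq]

lemma unionB_eq : (unionApprox Q).B = ⨆ i, (Q i).B := by
  simp [unionApprox, AddSubgroup.closure_iUnion, AddSubgroup.closure_eq]

variable (hdir : ∀ i j : ι, ∃ k, Ext (Q i) (Q k) ∧ Ext (Q j) (Q k))

lemma dirA (hdir : ∀ i j : ι, ∃ k, Ext (Q i) (Q k) ∧ Ext (Q j) (Q k)) :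
    Directed (· ≤ ·) (fun i => (Q i).A) := fun i j =>
  let ⟨k, h1, h2⟩ := hdir i j; ⟨k, h1.monoA, h2.monoA⟩

lemma dirB (hdir : ∀ i j : ι, ∃ k, Ext (Q i) (Q k) ∧ Ext (Q j) (Q k)) :
    Directed (· ≤ ·) (fun i => (Q i).B) := fun i j =>
  let ⟨k, h1, h2⟩ := hdir i j; ⟨k, h1.monoB, h2.monoB⟩

include hdir

lemma union_memA [Nonempty ι] {x : K} :
    x ∈ (unionApprox Q).A ↔ ∃ i, x ∈ (Q i).A := by
  rw [unionA_eq, AddSubgroup.mem_iSup_of_directed (dirA hdir)]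

lemma union_memB [Nonempty ι] {y : L} :
    y ∈ (unionApprox Q).B ↔ ∃ i, y ∈ (Q i).B := by
  rw [unionB_eq, AddSubgroup.mem_iSup_of_directed (dirB hdir)]

lemma union_compatA {i : ι} {x : K} (hx : x ∈ (Q i).A) :
    (unionApprox Q).φ x = (Q i).φ x := by
  have hex : ∃ j, x ∈ (Q j).A := ⟨i, hx⟩
  have h1 : (unionApprox Q).φ x = (Q hex.choose).φ x := by
    simp only [unionApprox]
    rw [dif_pos hex]
  obtain ⟨k, hk1, hk2⟩ := hdir hex.choose i
  rw [h1, ← hk1.agree x hex.choose_spec, hk2.agree x hx]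

lemma union_compatB {i : ι} {y : L} (hy : y ∈ (Q i).B) :
    (unionApprox Q).ψ y = (Q i).ψ y := by
  have hex : ∃ j, y ∈ (Q j).B := ⟨i, hy⟩
  have h1 : (unionApprox Q).ψ y = (Q hex.choose).ψ y := by
    simp only [unionApprox]
    rw [dif_pos hex]
  obtain ⟨k, hk1, hk2⟩ := hdir hex.choose i
  rw [h1, ← hk1.agree' y hex.choose_spec, hk2.agree' y hy]

lemma union_dispA {i : ι} {a : K} (ha : a ∈ (Q i).A) :
    disp (unionApprox Q).φ (unionApprox Q).A a ⊆ disp (Q i).φ (Q i).A a := by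
  haveI : Nonempty ι := ⟨i⟩
  rintro - ⟨x, hx, rfl⟩
  obtain ⟨j, hj⟩ := (union_memA hdir).1 hx
  obtain ⟨k, hk1, hk2⟩ := hdir i j
  have hxk : x ∈ (Q k).A := hk2.monoA hj
  have hak : a ∈ (Q k).A := hk1.monoA ha
  dsimp only
  rw [union_compatA hdir (add_mem hxk hak), union_compatA hdir hxk]
  exact hk1.stab a ha ⟨x, hxk, rfl⟩

lemma union_dispB {i : ι} {b : L} (hb : b ∈ (Q i).B) :
    disp (unionApprox Q).ψ (unionApprox Q).B b ⊆ disp (Q i).ψ (Q i).B b := by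
  haveI : Nonempty ι := ⟨i⟩
  rintro - ⟨y, hy, rfl⟩
  obtain ⟨j, hj⟩ := (union_memB hdir).1 hy
  obtain ⟨k, hk1, hk2⟩ := hdir i j
  have hyk : y ∈ (Q k).B := hk2.monoB hj
  have hbk : b ∈ (Q k).B := hk1.monoB hb
  dsimp only
  rw [union_compatB hdir (add_mem hyk hbk), union_compatB hdir hyk]
  exact hk1.stab' b hb ⟨y, hyk, rfl⟩

lemma union_ext (i : ι) : Ext (Q i) (unionApprox Q) := by
  refine ⟨?_, ?_, fun x hx => union_compatA hdir hx, fun y hy => union_compatB hdir hy,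
    fun a ha => union_dispA hdir ha, fun b hb => union_dispB hdir hb⟩
  · rw [unionA_eq]; exact le_iSup (fun i => (Q i).A) i
  · rw [unionB_eq]; exact le_iSup (fun i => (Q i).B) i

lemma union_good (hg : ∀ i, Good (Q i)) : Good (unionApprox Q) := by
  rcases isEmpty_or_nonempty ι with hE | hN
  · have hA : (unionApprox Q).A = ⊥ := by rw [unionA_eq]; exact iSup_of_empty _
    have hB : (unionApprox Q).B = ⊥ := by rw [unionB_eq]; exact iSup_of_empty _
    have hφ : ∀ x : K, (unionApprox Q).φ x = 0 := by
      intro x; simp only [unionApprox]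
      rw [dif_neg (by simp [hE.forall_iff])]
    have hψ : ∀ y : L, (unionApprox Q).ψ y = 0 := by
      intro y; simp only [unionApprox]
      rw [dif_neg (by simp [hE.forall_iff])]
    refine ⟨?_, ?_, ?_, ?_, ?_, ?_⟩ <;> simp only [hA, hB, AddSubgroup.mem_bot]
    · rintro x rfl; rw [hφ]
    · rintro y rfl; rw [hψ]
    · rintro x rfl; simp [hφ, hψ]
    · rintro y rfl; simp [hφ, hψ]
    · intro a _
      exact Set.Countable.image (Set.countable_singleton 0) _
    · intro b _
      exact Set.Countable.image (Set.countable_singleton 0) _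
  · refine ⟨?_, ?_, ?_, ?_, ?_, ?_⟩
    · intro x hx
      obtain ⟨i, hi⟩ := (union_memA hdir).1 hx
      rw [union_compatA hdir hi]
      exact (union_ext hdir i).monoB ((hg i).mapsTo x hi)
    · intro y hy
      obtain ⟨i, hi⟩ := (union_memB hdir).1 hy
      rw [union_compatB hdir hi]
      exact (union_ext hdir i).monoA ((hg i).mapsTo' y hi)
    · intro x hx
      obtain ⟨i, hi⟩ := (union_memA hdir).1 hx
      rw [union_compatA hdir hi, union_compatB hdir ((hg i).mapsTo x hi)]
      exact (hg i).linv x hi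
    · intro y hy
      obtain ⟨i, hi⟩ := (union_memB hdir).1 hy
      rw [union_compatB hdir hi, union_compatA hdir ((hg i).mapsTo' y hi)]
      exact (hg i).rinv y hi
    · intro a ha
      obtain ⟨i, hi⟩ := (union_memA hdir).1 ha
      exact ((hg i).dcount a hi).mono (union_dispA hdir hi)
    · intro b hb
      obtain ⟨i, hi⟩ := (union_memB hdir).1 hb
      exact ((hg i).dcount' b hi).mono (union_dispB hdir hi)

lemma union_cardA {c : Cardinal.{u}} (hc : ∀ i, #(Q i).A ≤ c) :
    #(unionApprox Q).A ≤ #ι * c + ℵ₀ := by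
  rcases isEmpty_or_nonempty ι with hE | hN
  · have hA : (unionApprox Q).A = ⊥ := by rw [unionA_eq]; exact iSup_of_empty _
    rw [hA]
    have : #(⊥ : AddSubgroup K) = 1 := Cardinal.mk_eq_one _
    rw [this]
    exact le_add_left (Cardinal.one_le_aleph0)
  · have hA : ((unionApprox Q).A : Set K) = ⋃ i, ((Q i).A : Set K) := by
      rw [unionA_eq]
      exact AddSubgroup.coe_iSup_of_directed (dirA hdir)
    have h1 : #(unionApprox Q).A = #(⋃ i, ((Q i).A : Set K)) :=
      Cardinal.mk_congr (Equiv.setCongr hA)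
    rw [h1]
    refine le_trans (Cardinal.mk_iUnion_le _) ?_
    refine le_trans (mul_le_mul' le_rfl (ciSup_le' fun i => hc i)) ?_
    exact self_le_add_right _ _

lemma union_cardB {c : Cardinal.{u}} (hc : ∀ i, #(Q i).B ≤ c) :
    #(unionApprox Q).B ≤ #ι * c + ℵ₀ := by
  rcases isEmpty_or_nonempty ι with hE | hN
  · have hB : (unionApprox Q).B = ⊥ := by rw [unionB_eq]; exact iSup_of_empty _
    rw [hB]
    have : #(⊥ : AddSubgroup L) = 1 := Cardinal.mk_eq_one _
    rw [this]
    exact le_add_left (Cardinal.one_le_aleph0)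
  · have hB : ((unionApprox Q).B : Set L) = ⋃ i, ((Q i).B : Set L) := by
      rw [unionB_eq]
      exact AddSubgroup.coe_iSup_of_directed (dirB hdir)
    have h1 : #(unionApprox Q).B = #(⋃ i, ((Q i).B : Set L)) :=
      Cardinal.mk_congr (Equiv.setCongr hB)
    rw [h1]
    refine le_trans (Cardinal.mk_iUnion_le _) ?_
    refine le_trans (mul_le_mul' le_rfl (ciSup_le' fun i => hc i)) ?_
    exact self_le_add_right _ _

end union
noncomputable def extChoice (p : Approx K L) (g : K) (h : L) : Approx K L :=
  letI := Classical.dec (Good p ∧ ℵ₀ < #K ∧ ℵ₀ < #L ∧ #p.A < #K ∧ #p.B < #L)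
  if hc : Good p ∧ ℵ₀ < #K ∧ ℵ₀ < #L ∧ #p.A < #K ∧ #p.B < #L then
    (step_exists hc.1 hc.2.1 hc.2.2.1 hc.2.2.2.1 hc.2.2.2.2 g h).choose
  else p

lemma extChoice_ext (p : Approx K L) (g : K) (h : L) : Ext p (extChoice p g h) := by
  rw [extChoice]
  split
  · next hc =>
      exact (step_exists hc.1 hc.2.1 hc.2.2.1 hc.2.2.2.1 hc.2.2.2.2 g h).choose_spec.2.1
  · exact Ext.refl p

lemma extChoice_spec {p : Approx K L} (g : K) (h : L)
    (hc : Good p ∧ ℵ₀ < #K ∧ ℵ₀ < #L ∧ #p.A < #K ∧ #p.B < #L) :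
    Good (extChoice p g h) ∧ g ∈ (extChoice p g h).A ∧ h ∈ (extChoice p g h).B ∧
      #(extChoice p g h).A ≤ #p.A + ℵ₀ ∧ #(extChoice p g h).B ≤ #p.B + ℵ₀ := by
  rw [extChoice]
  split
  · next hc' =>
      obtain ⟨h1, _, h3, h4, h5, h6⟩ :=
        (step_exists hc'.1 hc'.2.1 hc'.2.2.1 hc'.2.2.2.1 hc'.2.2.2.2 g h).choose_spec
      exact ⟨h1, h3, h4, h5, h6⟩
  · next hc' => exact absurd hc hc'

section recursion
variable {T : Type u} [LinearOrder T] [WellFoundedLT T]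

noncomputable def FRec (gE : T → K) (hE : T → L) : T → Approx K L :=
  (IsWellFounded.wf (r := ((· < ·) : T → T → Prop))).fix
    (fun a rec =>
      extChoice (unionApprox (fun i : {b : T // b < a} => rec i.1 i.2)) (gE a) (hE a))

lemma FRec_def (gE : T → K) (hE : T → L) (a : T) :
    FRec gE hE a = extChoice (unionApprox (fun i : {b : T // b < a} => FRec gE hE i.1))
      (gE a) (hE a) := by
  rw [FRec, WellFounded.fix_eq]

variable (gE : T → K) (hE : T → L)

/-- the induction invariant -/
def Pinv (a : T) : Prop :=
  Good (FRec gE hE a) ∧ (∀ b : T, b < a → Ext (FRec gE hE b) (FRec gE hE a)) ∧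
  gE a ∈ (FRec gE hE a).A ∧ hE a ∈ (FRec gE hE a).B ∧
  #(FRec gE hE a).A ≤ #{b : T // b < a} + ℵ₀ ∧
  #(FRec gE hE a).B ≤ #{b : T // b < a} + ℵ₀

lemma FRec_inv (hK : ℵ₀ < #K) (hL : ℵ₀ < #L)
    (hsK : ∀ a : T, #{b : T // b < a} < #K) (hsL : ∀ a : T, #{b : T // b < a} < #L) :
    ∀ a : T, Pinv gE hE a := by
  intro a
  induction a using WellFoundedLT.induction with
  | _ a ih =>
  set ι := {b : T // b < a} with hι
  set Q : ι → Approx K L := fun i => FRec gE hE i.1 with hQ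
  have hg : ∀ i, Good (Q i) := fun i => (ih i.1 i.2).1
  have hQeq : ∀ i j : ι, i.1 = j.1 → Q i = Q j := by
    rintro ⟨i, hi⟩ ⟨j, hj⟩ h
    simp only [hQ]
    cases h
    rfl
  have hdir : ∀ i j : ι, ∃ k, Ext (Q i) (Q k) ∧ Ext (Q j) (Q k) := by
    intro i j
    rcases le_total i.1 j.1 with hle | hle
    · rcases eq_or_lt_of_le hle with he | hlt
      · exact ⟨j, by rw [hQeq i j he]; exact Ext.refl _, Ext.refl _⟩
      · exact ⟨j, (ih j.1 j.2).2.1 i.1 hlt, Ext.refl _⟩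
    · rcases eq_or_lt_of_le hle with he | hlt
      · exact ⟨i, Ext.refl _, by rw [hQeq j i he]; exact Ext.refl _⟩
      · exact ⟨i, Ext.refl _, (ih i.1 i.2).2.1 j.1 hlt⟩
  have hbound : ∀ i : ι, #{b : T // b < i.1} ≤ #ι := by
    intro i
    have hinj : Function.Injective (fun x : {b : T // b < i.1} =>
        (⟨x.1, lt_trans x.2 i.2⟩ : ι)) := by
      intro x y hxy
      simpa [Subtype.ext_iff] using hxy
    exact Cardinal.mk_le_of_injective hinj
  have hcA : ∀ i : ι, #(Q i).A ≤ #ι + ℵ₀ := fun i =>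
    ((ih i.1 i.2).2.2.2.2.1).trans (add_le_add_left (hbound i) _)
  have hcB : ∀ i : ι, #(Q i).B ≤ #ι + ℵ₀ := fun i =>
    ((ih i.1 i.2).2.2.2.2.2).trans (add_le_add_left (hbound i) _)
  have haleph : (ℵ₀ : Cardinal.{u}) ≤ #ι + ℵ₀ := self_le_add_left _ _
  have hsq : (#ι + ℵ₀) * (#ι + ℵ₀) = #ι + ℵ₀ := Cardinal.mul_eq_self haleph
  have hUA : #(unionApprox Q).A ≤ #ι + ℵ₀ := by
    refine (union_cardA hdir hcA).trans ?_
    calc #ι * (#ι + ℵ₀) + ℵ₀ ≤ (#ι + ℵ₀) * (#ι + ℵ₀) + ℵ₀ :=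
          add_le_add_left (mul_le_mul' (self_le_add_right _ _) le_rfl) _
      _ = (#ι + ℵ₀) + ℵ₀ := by rw [hsq]
      _ = #ι + ℵ₀ := by rw [add_assoc, Cardinal.aleph0_add_aleph0]
  have hUB : #(unionApprox Q).B ≤ #ι + ℵ₀ := by
    refine (union_cardB hdir hcB).trans ?_
    calc #ι * (#ι + ℵ₀) + ℵ₀ ≤ (#ι + ℵ₀) * (#ι + ℵ₀) + ℵ₀ :=
          add_le_add_left (mul_le_mul' (self_le_add_right _ _) le_rfl) _
      _ = (#ι + ℵ₀) + ℵ₀ := by rw [hsq]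
      _ = #ι + ℵ₀ := by rw [add_assoc, Cardinal.aleph0_add_aleph0]
  have hiK : #ι + ℵ₀ < #K := Cardinal.add_lt_of_lt hK.le (hsK a) hK
  have hiL : #ι + ℵ₀ < #L := Cardinal.add_lt_of_lt hL.le (hsL a) hL
  have hcond : Good (unionApprox Q) ∧ ℵ₀ < #K ∧ ℵ₀ < #L ∧
      #(unionApprox Q).A < #K ∧ #(unionApprox Q).B < #L :=
    ⟨union_good hdir hg, hK, hL, lt_of_le_of_lt hUA hiK, lt_of_le_of_lt hUB hiL⟩
  obtain ⟨hgood, hga, hhb, hca, hcb⟩ := extChoice_spec (gE a) (hE a) hcond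
  rw [← FRec_def gE hE a] at hgood hga hhb hca hcb
  refine ⟨hgood, ?_, hga, hhb, ?_, ?_⟩
  · intro b hb
    have h1 : Ext (Q ⟨b, hb⟩) (unionApprox Q) := union_ext hdir ⟨b, hb⟩
    have h2 : Ext (unionApprox Q) (FRec gE hE a) := by
      rw [FRec_def gE hE a]
      exact extChoice_ext _ _ _
    exact Ext.trans h1 h2
  · refine hca.trans ((add_le_add_left hUA _).trans ?_)
    rw [add_assoc, Cardinal.aleph0_add_aleph0]
  · refine hcb.trans ((add_le_add_left hUB _).trans ?_)
    rw [add_assoc, Cardinal.aleph0_add_aleph0]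

end recursion
theorem exists_nice_aux (T : Type u) [LinearOrder T] [WellFoundedLT T]
    (hK : ℵ₀ < #K) (hL : ℵ₀ < #L) (eK : T ≃ K) (eL : T ≃ L)
    (hsmall : ∀ a : T, #{b : T // b < a} < #K)
    (hsmallL : ∀ a : T, #{b : T // b < a} < #L) :
    ∃ f : K ≃ L, (∀ a : K, (disp ⇑f Set.univ a).Countable) ∧
      (∀ b : L, (disp ⇑f.symm Set.univ b).Countable) := by
  have hinv := FRec_inv (K := K) (L := L) (T := T) ⇑eK ⇑eL hK hL hsmall hsmallL
  set Q : T → Approx K L := fun a => FRec ⇑eK ⇑eL a with hQdef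
  have hQeq : ∀ i j : T, i = j → Q i = Q j := by rintro i j rfl; rfl
  have hdir : ∀ i j : T, ∃ k, Ext (Q i) (Q k) ∧ Ext (Q j) (Q k) := by
    intro i j
    rcases le_total i j with hle | hle
    · rcases eq_or_lt_of_le hle with he | hlt
      · exact ⟨j, by rw [hQeq i j he]; exact Ext.refl _, Ext.refl _⟩
      · exact ⟨j, (hinv j).2.1 i hlt, Ext.refl _⟩
    · rcases eq_or_lt_of_le hle with he | hlt
      · exact ⟨i, Ext.refl _, by rw [hQeq j i he]; exact Ext.refl _⟩
      · exact ⟨i, Ext.refl _, (hinv i).2.1 j hlt⟩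
  have hGood : Good (unionApprox Q) := union_good hdir fun a => (hinv a).1
  have hmemA : ∀ x : K, x ∈ (unionApprox Q).A := by
    intro x
    have h1 : eK (eK.symm x) ∈ (Q (eK.symm x)).A := (hinv (eK.symm x)).2.2.1
    rw [Equiv.apply_symm_apply] at h1
    exact (union_ext hdir (eK.symm x)).monoA h1
  have hmemB : ∀ y : L, y ∈ (unionApprox Q).B := by
    intro y
    have h1 : eL (eL.symm y) ∈ (Q (eL.symm y)).B := (hinv (eL.symm y)).2.2.2.1
    rw [Equiv.apply_symm_apply] at h1
    exact (union_ext hdir (eL.symm y)).monoB h1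
  have hsetA : ((unionApprox Q).A : Set K) = Set.univ := Set.eq_univ_of_forall hmemA
  have hsetB : ((unionApprox Q).B : Set L) = Set.univ := Set.eq_univ_of_forall hmemB
  refine ⟨⟨(unionApprox Q).φ, (unionApprox Q).ψ,
    fun x => hGood.linv x (hmemA x), fun y => hGood.rinv y (hmemB y)⟩, ?_, ?_⟩
  · intro a
    have := hGood.dcount a (hmemA a)
    rwa [show disp (unionApprox Q).φ ((unionApprox Q).A : Set K) a
      = disp (unionApprox Q).φ Set.univ a by rw [hsetA]] at this
  · intro b
    have := hGood.dcount' b (hmemB b)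
    rwa [show disp (unionApprox Q).ψ ((unionApprox Q).B : Set L) b
      = disp (unionApprox Q).ψ Set.univ b by rw [hsetB]] at this

theorem exists_nice (hK : ℵ₀ < #K) (hLK : #L = #K) :
    ∃ f : K ≃ L, (∀ a : K, (disp ⇑f Set.univ a).Countable) ∧
      (∀ b : L, (disp ⇑f.symm Set.univ b).Countable) := by
  have hL : ℵ₀ < #L := by rw [hLK]; exact hK
  have hTK : #(#K).ord.ToType = #K := by rw [Cardinal.mk_toType, Cardinal.card_ord]
  obtain ⟨eK⟩ : Nonempty ((#K).ord.ToType ≃ K) := Cardinal.eq.1 hTK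
  obtain ⟨eL⟩ : Nonempty ((#K).ord.ToType ≃ L) := Cardinal.eq.1 (hTK.trans hLK.symm)
  haveI : IsWellOrder (#K).ord.ToType (· < ·) := ⟨⟩
  have hsmall : ∀ a : (#K).ord.ToType, #{b // b < a} < #K := by
    intro a
    have h2 : Ordinal.typein (α := (#K).ord.ToType) (· < ·) a
        < Ordinal.type (α := (#K).ord.ToType) (· < ·) := Ordinal.typein_lt_type _ a
    rw [Ordinal.type_toType] at h2
    have h3 := Cardinal.lt_ord.1 h2
    show (Ordinal.typein (α := (#K).ord.ToType) (· < ·) a).card < #K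
    exact h3
  have hsmallL : ∀ a : (#K).ord.ToType, #{b // b < a} < #L := by
    intro a; rw [hLK]; exact hsmall a
  exact exists_nice_aux (#K).ord.ToType hK hL eK eL hsmall hsmallL

end Asym
lemma Asym.card_iUnion_lt {α β : Type u} {κ : Cardinal.{u}} (S : Set α) (D : α → Set β)
    (hD : ∀ a, (D a).Countable) (hS : #S < κ) (hκ : ℵ₀ < κ) :
    #(⋃ a : S, D a.1) < κ := by
  refine lt_of_le_of_lt (Cardinal.mk_iUnion_le _) ?_
  have hsup : ⨆ a : S, #(D a.1) ≤ ℵ₀ := by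
    rcases isEmpty_or_nonempty S with hE | hN
    · rw [ciSup_of_empty]
      exact bot_le.trans le_rfl
    · exact ciSup_le' fun a => (hD a.1).le_aleph0
  exact lt_of_le_of_lt (mul_le_mul' le_rfl hsup) (Cardinal.mul_lt_of_lt hκ.le hS hκ)

/-- Every Abelian group of uncountable cardinality `γ` is `κ`-asymorphic to the free
Abelian group of rank `γ` (the direct sum of `γ` copies of `ℤ`), for any `ℵ₀ < κ ≤ γ`. -/
theorem abelian_asymorphic_free_abelian (γ κ : Cardinal.{u})
    (hγ : ℵ₀ < γ) (hκ : ℵ₀ < κ) (hκγ : κ ≤ γ)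
    (G : Type u) [AddCommGroup G] (hG : #G = γ)
    (ι : Type u) (hι : #ι = γ) :
    ∃ f : G ≃ (ι →₀ ℤ), IsAddAsymorphism κ f := by
  have hγ0 : ℵ₀ < #G := by rw [hG]; exact hγ
  have hH : #(ι →₀ ℤ) = #G := by
    haveI : Infinite ι := Cardinal.infinite_iff.2 (by rw [hι]; exact hγ.le)
    rw [Cardinal.mk_finsupp_lift_of_infinite, Cardinal.mk_int, hι, hG]
    simp only [Cardinal.lift_id', Cardinal.lift_aleph0, Cardinal.lift_id]
    exact max_eq_left hγ.le
  obtain ⟨f, hf1, hf2⟩ := Asym.exists_nice (K := G) (L := ι →₀ ℤ) hγ0 hH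
  refine ⟨f, ?_⟩
  intro X Y hX hY
  refine ⟨⋃ b : Y, Asym.disp ⇑f.symm Set.univ b.1, ⋃ a : X, Asym.disp ⇑f Set.univ a.1,
    Asym.card_iUnion_lt Y _ hf2 hY hκ, Asym.card_iUnion_lt X _ hf1 hX hκ, ?_, ?_⟩
  · intro x
    rintro - ⟨w, hw, rfl⟩
    rw [Set.mem_add] at hw
    obtain ⟨a, ha, x', hx', rfl⟩ := hw
    rw [Set.mem_singleton_iff] at hx'
    subst hx'
    rw [Set.mem_add]
    refine ⟨f (a + x') - f x', ?_, f x', Set.mem_singleton _, sub_add_cancel _ _⟩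
    refine Set.mem_iUnion.2 ⟨⟨a, ha⟩, ?_⟩
    refine ⟨x', Set.mem_univ x', ?_⟩
    show f (x' + a) - f x' = f (a + x') - f x'
    rw [add_comm x' a]
  · intro y
    rintro - ⟨w, hw, rfl⟩
    rw [Set.mem_add] at hw
    obtain ⟨b, hb, y', hy', rfl⟩ := hw
    rw [Set.mem_singleton_iff] at hy'
    subst hy'
    rw [Set.mem_add]
    refine ⟨f.symm (b + y') - f.symm y', ?_, f.symm y', Set.mem_singleton _,
      sub_add_cancel _ _⟩
    refine Set.mem_iUnion.2 ⟨⟨b, hb⟩, ?_⟩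
    refine ⟨y', Set.mem_univ y', ?_⟩
    show f.symm (y' + b) - f.symm y' = f.symm (b + y') - f.symm y'
    rw [add_comm y' b]
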